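/- arXiv:1410.4878 — 2 statements merged into one kernel-verified Lean document; each statement's English description precedes it below -/
import Mathlib

section
/- Let $n \ge 2$ and let $s_0, \dots, s_n$ be positive reals with $s_k^2 \ge s_{k-1}s_{k+1}$ for $1 \le k \le n-1$. If $\left(\sum_{k=0}^n \binom{n}{k} s_k\right)^{1/n} = s_0^{1/n} + s_n^{1/n}$, then $s_k^2 = s_{k-1} s_{k+1}$ for all $1 \le k \le n-1$. -/
/-- Discrete chord inequality for a sequence with nonincreasing differences. -/
lemma chord_aux (n : ℕ) (f : ℕ → ℝ)
    (hd : ∀ i j, i ≤ j → j + 1 ≤ n → f (j + 1) - f j ≤ f (i + 1) - f i) :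
    ∀ k ≤ n, (k : ℝ) * f n + ((n : ℝ) - k) * f 0 ≤ (n : ℝ) * f k := by
  intro k hk
  set d : ℕ → ℝ := fun i => f (i + 1) - f i with hdef
  have hsum : ∀ m, ∑ i ∈ Finset.range m, d i = f m - f 0 := fun m =>
    Finset.sum_range_sub f m
  -- suffices : k * ∑_{range n} d ≤ n * ∑_{range k} d
  suffices h : (k : ℝ) * ∑ i ∈ Finset.range n, d i ≤ (n : ℝ) * ∑ i ∈ Finset.range k, d i by
    rw [hsum, hsum] at h
    nlinarith [h]
  rcases Nat.eq_zero_or_pos k with hk0 | hk1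
  · subst hk0; simp
  rcases eq_or_lt_of_le hk with hkn | hkn
  · subst hkn; simp
  -- 1 ≤ k < n
  have hsplit : ∑ i ∈ Finset.range n, d i
      = (∑ i ∈ Finset.range k, d i) + ∑ i ∈ Finset.Ico k n, d i := by
    rw [Finset.range_eq_Ico, Finset.range_eq_Ico]
    exact (Finset.sum_Ico_consecutive d (Nat.zero_le k) hk).symm
  have hlow : (k : ℝ) * d (k - 1) ≤ ∑ i ∈ Finset.range k, d i := by
    have := Finset.card_nsmul_le_sum (Finset.range k) d (d (k - 1)) ?_
    · simpa [nsmul_eq_mul] using this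
    · intro i hi
      rw [Finset.mem_range] at hi
      exact hd i (k - 1) (by omega) (by omega)
  have hup : ∑ i ∈ Finset.Ico k n, d i ≤ ((n : ℝ) - k) * d (k - 1) := by
    have := Finset.sum_le_card_nsmul (Finset.Ico k n) d (d (k - 1)) ?_
    · have hcard : ((Finset.Ico k n).card : ℝ) = (n : ℝ) - k := by
        rw [Nat.card_Ico]; push_cast [Nat.cast_sub hk]; ring
      rw [nsmul_eq_mul, hcard] at this
      exact this
    · intro i hi
      rw [Finset.mem_Ico] at hi
      exact hd (k - 1) i (by omega) (by omega)
  have hknn : (0 : ℝ) ≤ (n : ℝ) - k := by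
    have : (k : ℝ) ≤ n := Nat.cast_le.mpr hk
    linarith
  have hkpos : (0 : ℝ) ≤ (k : ℝ) := Nat.cast_nonneg k
  rw [hsplit]
  nlinarith [mul_le_mul_of_nonneg_left hup hkpos,
    mul_le_mul_of_nonneg_left hlow hknn]

theorem stmt_4 (n : ℕ) (hn : 2 ≤ n) (s : ℕ → ℝ)
    (hpos : ∀ k ≤ n, 0 < s k)
    (hlc : ∀ k, 1 ≤ k → k ≤ n - 1 → s (k - 1) * s (k + 1) ≤ (s k) ^ 2)
    (hvol : (∑ k ∈ Finset.range (n + 1), (n.choose k : ℝ) * s k) ^ ((1 : ℝ) / n)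
        = s 0 ^ ((1 : ℝ) / n) + s n ^ ((1 : ℝ) / n)) :
    ∀ k, 1 ≤ k → k ≤ n - 1 → (s k) ^ 2 = s (k - 1) * s (k + 1) := by
  have hn0 : (0 : ℝ) < n := by positivity
  have ha : 0 < s 0 := hpos 0 (by omega)
  have hb : 0 < s n := hpos n le_rfl
  set A : ℝ := s 0 ^ ((1 : ℝ) / n) with hA
  set B : ℝ := s n ^ ((1 : ℝ) / n) with hB
  have hApos : 0 < A := Real.rpow_pos_of_pos ha _
  have hBpos : 0 < B := Real.rpow_pos_of_pos hb _
  set g : ℕ → ℝ := fun k => B ^ k * A ^ (n - k) with hg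
  have hgpos : ∀ k, 0 < g k := fun k => by positivity
  -- differences of log s are nonincreasing
  have hd : ∀ i j, i ≤ j → j + 1 ≤ n →
      Real.log (s (j + 1)) - Real.log (s j) ≤ Real.log (s (i + 1)) - Real.log (s i) := by
    have step : ∀ m, 1 ≤ m → m + 1 ≤ n →
        Real.log (s (m + 1)) - Real.log (s m) ≤ Real.log (s m) - Real.log (s (m - 1)) := by
      intro m hm1 hmn
      have h := hlc m hm1 (by omega)
      have h1 : Real.log (s (m - 1) * s (m + 1)) ≤ Real.log ((s m) ^ 2) :=
        Real.log_le_log (mul_pos (hpos (m - 1) (by omega)) (hpos (m + 1) (by omega))) h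
      rw [Real.log_mul (hpos (m - 1) (by omega)).ne' (hpos (m + 1) (by omega)).ne',
        Real.log_pow] at h1
      push_cast at h1
      linarith
    intro i j hij hjn
    induction j with
    | zero =>
      have : i = 0 := by omega
      subst this
      exact le_rfl
    | succ j ih =>
      rcases eq_or_lt_of_le hij with h | h
      · subst h
        exact le_rfl
      · have hij' : i ≤ j := by omega
        calc Real.log (s (j + 1 + 1)) - Real.log (s (j + 1))
            ≤ Real.log (s (j + 1)) - Real.log (s j) := by
              have := step (j + 1) (by omega) (by omega)
              simpa using this
          _ ≤ Real.log (s (i + 1)) - Real.log (s i) := ih hij' (by omega)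
  -- pointwise lower bound: g k ≤ s k
  have hgs : ∀ k ≤ n, g k ≤ s k := by
    intro k hk
    have hc := chord_aux n (fun m => Real.log (s m)) hd k hk
    rw [← Real.log_le_log_iff (hgpos k) (hpos k hk)]
    have hlog : Real.log (g k)
        = (k : ℝ) * ((1 / n) * Real.log (s n))
          + ((n : ℝ) - k) * ((1 / n) * Real.log (s 0)) := by
      rw [hg]
      simp only
      rw [Real.log_mul (by positivity) (by positivity), Real.log_pow, Real.log_pow,
        hA, hB, Real.log_rpow hb, Real.log_rpow ha, Nat.cast_sub hk]
    rw [hlog]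
    have h2 := mul_le_mul_of_nonneg_left hc (le_of_lt (one_div_pos.mpr hn0))
    have h3 : (1 / (n : ℝ)) * ((n : ℝ) * Real.log (s k)) = Real.log (s k) := by
      field_simp
    rw [h3] at h2
    nlinarith [h2]
  -- the binomial sum of g equals (A + B)^n
  have hbin : ∑ k ∈ Finset.range (n + 1), (n.choose k : ℝ) * g k = (B + A) ^ n := by
    rw [add_pow]
    apply Finset.sum_congr rfl
    intro k _
    rw [hg]; ring
  -- from hvol: the sum equals (A + B)^n
  have hsumpos : 0 < ∑ k ∈ Finset.range (n + 1), (n.choose k : ℝ) * s k := by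
    apply Finset.sum_pos
    · intro k hk
      rw [Finset.mem_range] at hk
      have : 0 < n.choose k := Nat.choose_pos (by omega)
      have := hpos k (by omega)
      positivity
    · exact ⟨0, Finset.mem_range.mpr (by omega)⟩
  have hsum_eq : ∑ k ∈ Finset.range (n + 1), (n.choose k : ℝ) * s k = (B + A) ^ n := by
    have h1 : ((∑ k ∈ Finset.range (n + 1), (n.choose k : ℝ) * s k) ^ ((1 : ℝ) / n)) ^ (n : ℕ)
        = ∑ k ∈ Finset.range (n + 1), (n.choose k : ℝ) * s k := by
      rw [← Real.rpow_natCast (_ ^ ((1 : ℝ) / n)), ← Real.rpow_mul hsumpos.le]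
      rw [one_div_mul_cancel (by positivity : (n : ℝ) ≠ 0), Real.rpow_one]
    rw [← h1, hvol, add_comm A B]
  -- conclude pointwise equality
  have heq : ∀ k ∈ Finset.range (n + 1), (n.choose k : ℝ) * g k = (n.choose k : ℝ) * s k := by
    rw [← Finset.sum_eq_sum_iff_of_le]
    · rw [hbin, hsum_eq]
    · intro k hk
      rw [Finset.mem_range] at hk
      have hchoose : (0 : ℝ) ≤ (n.choose k : ℝ) := Nat.cast_nonneg _
      exact mul_le_mul_of_nonneg_left (hgs k (by omega)) hchoose
  have hsg : ∀ k ≤ n, s k = g k := by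
    intro k hk
    have h := heq k (Finset.mem_range.mpr (by omega))
    have hchoose : (0 : ℝ) < (n.choose k : ℝ) := by
      exact_mod_cast Nat.choose_pos hk
    exact (mul_left_cancel₀ hchoose.ne' h).symm
  -- finish
  intro k hk1 hk2
  have hkn : k + 1 ≤ n := by omega
  rw [hsg k (by omega), hsg (k - 1) (by omega), hsg (k + 1) (by omega)]
  rw [hg]
  simp only
  obtain ⟨m, hm⟩ : ∃ m, k = m + 1 := ⟨k - 1, by omega⟩
  obtain ⟨p, hp⟩ : ∃ p, n - k = p + 1 := ⟨n - k - 1, by omega⟩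
  have e1 : k - 1 = m := by omega
  have e2 : n - (k - 1) = p + 2 := by omega
  have e3 : n - (k + 1) = p := by omega
  rw [e2, e3, e1, hp, hm]
  ring
end

section
/- Let $A$ and $B$ be $n \times n$ positive definite Hermitian matrices with $\det A = \det B$ and $\operatorname{tr}(B^{-1}(A-B)) = 0$. Then $A = B$. -/
open scoped ComplexOrder

open Matrix

lemma aux_posdef_conj {n : Type*} [Fintype n] [DecidableEq n]
    {A B : Matrix n n ℂ} (hA : A.PosDef) (hB : IsUnit B) :
    (Bᴴ * A * B).PosDef := by
  refine Matrix.posDef_iff_dotProduct_mulVec.mpr ⟨isHermitian_conjTranspose_mul_mul B hA.1, fun x hx => ?_⟩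
  have hinj := Matrix.mulVec_injective_iff_isUnit.mpr hB
  have hBx : B *ᵥ x ≠ 0 := by
    intro h0
    exact hx (hinj (by simpa using h0))
  have h := hA.dotProduct_mulVec_pos hBx
  simpa only [star_mulVec, dotProduct_mulVec, vecMul_vecMul] using h

lemma aux_trace_eq {n : Type*} [Fintype n] [DecidableEq n]
    {C : Matrix n n ℂ} (hC : C.IsHermitian) :
    C.trace = ∑ i, (hC.eigenvalues i : ℂ) := by
  conv_lhs => rw [hC.spectral_theorem, Unitary.conjStarAlgAut_apply]
  rw [Matrix.trace_mul_cycle]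
  rw [show (star (hC.eigenvectorUnitary : Matrix n n ℂ)) *
      (hC.eigenvectorUnitary : Matrix n n ℂ) = 1 from
    (Matrix.mem_unitaryGroup_iff').mp hC.eigenvectorUnitary.2, Matrix.one_mul,
    Matrix.trace_diagonal]
  rfl

lemma aux_amgm {n : Type*} [Fintype n] {f : n → ℝ} (hpos : ∀ i, 0 < f i)
    (hsum : ∑ i, f i = (Fintype.card n : ℝ)) (hprod : ∏ i, f i = 1) :
    ∀ i, f i = 1 := by
  by_contra h
  push_neg at h
  obtain ⟨j, hj⟩ := h
  have hlog : ∀ i ∈ Finset.univ, Real.log (f i) ≤ f i - 1 :=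
    fun i _ => Real.log_le_sub_one_of_pos (hpos i)
  have hstrict : Real.log (f j) < f j - 1 :=
    Real.log_lt_sub_one_of_pos (hpos j) hj
  have hsumlog : ∑ i, Real.log (f i) = 0 := by
    rw [← Real.log_prod (fun i _ => (hpos i).ne'), hprod, Real.log_one]
  have h1 : (0 : ℝ) < ∑ i, (f i - 1) := by
    rw [← hsumlog]
    exact Finset.sum_lt_sum hlog ⟨j, Finset.mem_univ j, hstrict⟩
  rw [Finset.sum_sub_distrib, hsum] at h1
  simp at h1

theorem stmt_8 (n : ℕ) (A B : Matrix (Fin n) (Fin n) ℂ)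
    (hA : A.PosDef) (hB : B.PosDef)
    (hdet : A.det = B.det) (htr : (B⁻¹ * (A - B)).trace = 0) :
    A = B := by
  open scoped MatrixOrder in
  set S := CFC.sqrt B with hSdef
  open scoped MatrixOrder in
  have hS2 : S * S = B := CFC.sqrt_mul_sqrt_self B hB.posSemidef.nonneg
  open scoped MatrixOrder in
  have hSH : S.IsHermitian := (CFC.sqrt_nonneg B).posSemidef.1
  have hdetB : B.det ≠ 0 := hB.det_pos.ne'
  have hdetS : S.det ≠ 0 := by
    intro h
    apply hdetB
    rw [← hS2, Matrix.det_mul, h, mul_zero]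
  have hSunit : IsUnit S := (Matrix.isUnit_iff_isUnit_det S).mpr hdetS.isUnit
  have hSinvunit : IsUnit S⁻¹ := (Matrix.isUnit_nonsing_inv_iff).mpr hSunit
  have hSiH : (S⁻¹).IsHermitian := hSH.inv
  -- C := S⁻¹ * A * S⁻¹ is posdef
  have hC : (S⁻¹ * A * S⁻¹).PosDef := by
    have := aux_posdef_conj hA hSinvunit
    rwa [hSiH.eq] at this
  set C := S⁻¹ * A * S⁻¹ with hCdef
  -- trace C = n
  have htrBA : (B⁻¹ * A).trace = (n : ℂ) := by
    have h1 : (B⁻¹ * (A - B)) = B⁻¹ * A - B⁻¹ * B := Matrix.mul_sub _ _ _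
    rw [h1, Matrix.trace_sub, Matrix.nonsing_inv_mul B hdetB.isUnit,
      Matrix.trace_one, sub_eq_zero] at htr
    simpa using htr
  have htrC : C.trace = (n : ℂ) := by
    rw [hCdef, Matrix.trace_mul_cycle, ← Matrix.mul_inv_rev, hS2]
    exact htrBA
  -- det C = 1
  have hdetC : C.det = 1 := by
    have hSS : S.det * S.det = B.det := by rw [← Matrix.det_mul, hS2]
    rw [hCdef, Matrix.det_mul, Matrix.det_mul, Matrix.det_nonsing_inv, Ring.inverse_eq_inv',
      hdet, ← hSS]
    field_simp
  -- eigenvalues of C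
  have hpos := hC.eigenvalues_pos
  have hsum : ∑ i, hC.1.eigenvalues i = (n : ℝ) := by
    have := aux_trace_eq hC.1
    rw [this] at htrC
    have : ((∑ i, hC.1.eigenvalues i : ℝ) : ℂ) = ((n : ℝ) : ℂ) := by
      push_cast
      simpa using htrC
    exact_mod_cast this
  have hprod : ∏ i, hC.1.eigenvalues i = 1 := by
    have := hC.1.det_eq_prod_eigenvalues
    rw [hdetC] at this
    have : ((∏ i, hC.1.eigenvalues i : ℝ) : ℂ) = ((1 : ℝ) : ℂ) := by
      push_cast
      simpa using this.symm
    exact_mod_cast this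
  have hall : ∀ i, hC.1.eigenvalues i = 1 :=
    aux_amgm hpos (by simpa using hsum) hprod
  -- C = 1
  have hC1 : C = 1 := by
    conv_lhs => rw [hC.1.spectral_theorem, Unitary.conjStarAlgAut_apply]
    have : Matrix.diagonal (RCLike.ofReal ∘ hC.1.eigenvalues) = (1 : Matrix (Fin n) (Fin n) ℂ) := by
      rw [show (RCLike.ofReal ∘ hC.1.eigenvalues : Fin n → ℂ) = fun _ => 1 from
        funext fun i => by simp [hall i]]
      exact Matrix.diagonal_one
    rw [this, Matrix.mul_one]
    exact (Matrix.mem_unitaryGroup_iff).mp hC.1.eigenvectorUnitary.2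
  -- conclude
  have : S * C * S = A := by
    rw [hCdef, Matrix.mul_assoc, Matrix.mul_assoc, Matrix.nonsing_inv_mul S hdetS.isUnit,
      Matrix.mul_one, ← Matrix.mul_assoc, Matrix.mul_nonsing_inv S hdetS.isUnit, Matrix.one_mul]
  rw [← this, hC1, Matrix.mul_one, hS2]
end
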